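/- Curvature singularity on the interior-exterior boundary: as ρ → r_s (through ρ > 0, ρ ≠ r_s), lim |1 − r_s/ρ|^{2(2ζ + k̃ − 1)} · K(ρ) = (2/(ζ⁸ r_s⁴)) · [ ζ(4k̃³ − 5k̃² − 3) + (9k̃⁴ − 2k̃³ + 10k̃² + 3) ]; moreover this constant vanishes exactly when k̃ = 0 or k̃ = −1, and for every k̃ ∉ {0, −1} one has K(ρ) → +∞ as ρ → r_s. -/

import Mathlib

open Real Filter Topology

lemma kbs_D_pos (k : ℝ) : 0 < 9 * k ^ 4 - 2 * k ^ 3 + 10 * k ^ 2 + 3 := by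
  nlinarith [sq_nonneg (k ^ 2 - k), sq_nonneg (k ^ 2), sq_nonneg k]

lemma kbs_abs_sign_le_one (x : ℝ) : |Real.sign x| ≤ 1 := by
  rcases lt_trichotomy x 0 with h | h | h
  · rw [Real.sign_of_neg h]; norm_num
  · rw [h, Real.sign_zero]; norm_num
  · rw [Real.sign_of_pos h]; norm_num

lemma kbs_sum_pos (k ζ : ℝ) (hζ1 : 1 ≤ ζ) (hζsq : ζ ^ 2 = 1 + 3 * k ^ 2)
    (h0 : k ≠ 0) (h1 : k ≠ -1) :
    0 < ζ * (4 * k ^ 3 - 5 * k ^ 2 - 3) + (9 * k ^ 4 - 2 * k ^ 3 + 10 * k ^ 2 + 3) := by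
  set A : ℝ := 4 * k ^ 3 - 5 * k ^ 2 - 3 with hA
  set D : ℝ := 9 * k ^ 4 - 2 * k ^ 3 + 10 * k ^ 2 + 3 with hD
  have hDpos : 0 < D := kbs_D_pos k
  have hk2 : 0 < k ^ 2 := by positivity
  have hk1 : 0 < (k + 1) ^ 2 := by
    have : k + 1 ≠ 0 := fun h => h1 (by linarith)
    positivity
  have hQ : 0 < 11 * k ^ 4 + 6 * k ^ 3 + 8 * k ^ 2 + 2 * k + 1 := by
    nlinarith [sq_nonneg (3 * k ^ 2 + k), sq_nonneg (7 * k + 1), sq_nonneg (k ^ 2)]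
  have hP : 0 < D ^ 2 - (1 + 3 * k ^ 2) * A ^ 2 := by
    have : D ^ 2 - (1 + 3 * k ^ 2) * A ^ 2 =
        3 * (k ^ 2 * ((k + 1) ^ 2 * (11 * k ^ 4 + 6 * k ^ 3 + 8 * k ^ 2 + 2 * k + 1))) := by
      rw [hA, hD]; ring
    rw [this]
    positivity
  rcases le_or_gt A 0 with hAle | hApos
  · by_contra hcon
    push_neg at hcon
    have hζ0 : 0 < ζ := lt_of_lt_of_le one_pos hζ1
    have h2 : D - ζ * A > 0 := by nlinarith [mul_nonpos_of_nonneg_of_nonpos (le_of_lt hζ0) hAle]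
    have h3 : (ζ * A + D) * (D - ζ * A) ≤ 0 := mul_nonpos_of_nonpos_of_nonneg hcon (le_of_lt h2)
    have h4 : (ζ * A + D) * (D - ζ * A) = D ^ 2 - (1 + 3 * k ^ 2) * A ^ 2 := by
      rw [← hζsq]; ring
    linarith [h4 ▸ h3]
  · have : 0 < ζ * A := mul_pos (lt_of_lt_of_le one_pos hζ1) hApos
    linarith

/-- Curvature singularity on the interior-exterior boundary: as `ρ → r_s` (through
`ρ > 0`, `ρ ≠ r_s`), `|1 − r_s/ρ|^{2(2ζ + k̃ − 1)}·K(ρ)` tends to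
`(2/(ζ⁸ r_s⁴))·[ζ(4k̃³ − 5k̃² − 3) + (9k̃⁴ − 2k̃³ + 10k̃² + 3)]`; this constant vanishes
exactly when `k̃ = 0` or `k̃ = −1`, and for `k̃ ∉ {0, −1}` one has `K(ρ) → +∞`. -/
theorem kretschmann_boundary_singularity
    (rs kt : ℝ) (hrs : 0 < rs)
    (ζ : ℝ) (hζ : ζ = Real.sqrt (1 + 3 * kt ^ 2))
    (K : ℝ → ℝ)
    (hK : ∀ ρ : ℝ, 0 < ρ → ρ ≠ rs → K ρ =
      (2 / (ζ ^ 8 * rs ^ 4)) *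
        (1 - Real.sign (1 - rs / ρ) * |1 - rs / ρ| ^ ζ) ^ 6 *
        |1 - rs / ρ| ^ (2 - 4 * ζ - 2 * kt) *
        (4 * kt ^ 2 * (kt + 1) * Real.sign (1 - rs / ρ) * |1 - rs / ρ| ^ ζ +
          ζ * (4 * kt ^ 3 - 5 * kt ^ 2 - 3) * (1 - |1 - rs / ρ| ^ (2 * ζ)) +
          (9 * kt ^ 4 - 2 * kt ^ 3 + 10 * kt ^ 2 + 3) * (1 + |1 - rs / ρ| ^ (2 * ζ)))) :
    Tendsto (fun ρ : ℝ => |1 - rs / ρ| ^ (2 * (2 * ζ + kt - 1)) * K ρ)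
        (𝓝[Set.Ioi 0 \ {rs}] rs)
        (𝓝 ((2 / (ζ ^ 8 * rs ^ 4)) *
          (ζ * (4 * kt ^ 3 - 5 * kt ^ 2 - 3) +
            (9 * kt ^ 4 - 2 * kt ^ 3 + 10 * kt ^ 2 + 3)))) ∧
      ((2 / (ζ ^ 8 * rs ^ 4)) *
          (ζ * (4 * kt ^ 3 - 5 * kt ^ 2 - 3) +
            (9 * kt ^ 4 - 2 * kt ^ 3 + 10 * kt ^ 2 + 3)) = 0 ↔ kt = 0 ∨ kt = -1) ∧
      (kt ≠ 0 → kt ≠ -1 → Tendsto K (𝓝[Set.Ioi 0 \ {rs}] rs) atTop) := by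
  have hone : (1 : ℝ) ≤ 1 + 3 * kt ^ 2 := by nlinarith [sq_nonneg kt]
  have hζ1 : 1 ≤ ζ := by
    rw [hζ]
    calc (1:ℝ) = Real.sqrt 1 := Real.sqrt_one.symm
    _ ≤ _ := Real.sqrt_le_sqrt hone
  have hζ0 : 0 < ζ := lt_of_lt_of_le one_pos hζ1
  have hζsq : ζ ^ 2 = 1 + 3 * kt ^ 2 := by
    rw [hζ, Real.sq_sqrt (by linarith : (0:ℝ) ≤ 1 + 3 * kt ^ 2)]
  have hCpos : 0 < 2 / (ζ ^ 8 * rs ^ 4) := by positivity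
  -- eventually facts
  have hmem : ∀ᶠ ρ in 𝓝[Set.Ioi 0 \ {rs}] rs, ρ ∈ Set.Ioi 0 \ {rs} :=
    eventually_mem_nhdsWithin
  have hx0 : ∀ ρ ∈ Set.Ioi 0 \ ({rs} : Set ℝ), 1 - rs / ρ ≠ 0 := by
    rintro ρ ⟨hρ, hne⟩ h
    apply hne
    have hρ0 : (ρ : ℝ) ≠ 0 := ne_of_gt hρ
    have : rs / ρ = 1 := by linarith
    have : rs = ρ := (div_eq_one_iff_eq hρ0).mp this
    simp [this.symm]
  -- |1 - rs/ρ| → 0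
  have habs : Tendsto (fun ρ : ℝ => |1 - rs / ρ|) (𝓝[Set.Ioi 0 \ {rs}] rs) (𝓝 0) := by
    have hc : ContinuousAt (fun ρ : ℝ => 1 - rs / ρ) rs :=
      continuousAt_const.sub (continuousAt_const.div continuousAt_id (ne_of_gt hrs))
    have h := (hc.tendsto.mono_left (nhdsWithin_le_nhds (s := Set.Ioi 0 \ {rs}))).abs
    simpa [div_self (ne_of_gt hrs)] using h
  have hrp : ∀ e : ℝ, 0 < e →
      Tendsto (fun ρ : ℝ => |1 - rs / ρ| ^ e) (𝓝[Set.Ioi 0 \ {rs}] rs) (𝓝 0) := by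
    intro e he
    have hc : ContinuousAt (fun y : ℝ => y ^ e) 0 :=
      Real.continuousAt_rpow_const 0 e (Or.inr he.le)
    have := hc.tendsto.comp habs
    simpa [Real.zero_rpow (ne_of_gt he), Function.comp_def] using this
  have hu : Tendsto (fun ρ : ℝ => Real.sign (1 - rs / ρ) * |1 - rs / ρ| ^ ζ)
      (𝓝[Set.Ioi 0 \ {rs}] rs) (𝓝 0) := by
    apply squeeze_zero_norm' ?_ (hrp ζ hζ0)
    filter_upwards with ρ
    have ht : (0:ℝ) ≤ |1 - rs / ρ| ^ ζ := Real.rpow_nonneg (abs_nonneg _) _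
    rw [Real.norm_eq_abs, abs_mul, abs_of_nonneg ht]
    calc |Real.sign (1 - rs / ρ)| * |1 - rs / ρ| ^ ζ
        ≤ 1 * |1 - rs / ρ| ^ ζ := by
          apply mul_le_mul_of_nonneg_right (kbs_abs_sign_le_one _) ht
      _ = |1 - rs / ρ| ^ ζ := one_mul _
  have hv : Tendsto (fun ρ : ℝ => |1 - rs / ρ| ^ (2 * ζ))
      (𝓝[Set.Ioi 0 \ {rs}] rs) (𝓝 0) := hrp (2 * ζ) (by positivity)
  -- the simplified expression and its limit
  have heq1 : ∀ᶠ ρ in 𝓝[Set.Ioi 0 \ {rs}] rs,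
      |1 - rs / ρ| ^ (2 * (2 * ζ + kt - 1)) * K ρ =
      (2 / (ζ ^ 8 * rs ^ 4)) *
        (1 - Real.sign (1 - rs / ρ) * |1 - rs / ρ| ^ ζ) ^ 6 *
        (4 * kt ^ 2 * (kt + 1) * (Real.sign (1 - rs / ρ) * |1 - rs / ρ| ^ ζ) +
          ζ * (4 * kt ^ 3 - 5 * kt ^ 2 - 3) * (1 - |1 - rs / ρ| ^ (2 * ζ)) +
          (9 * kt ^ 4 - 2 * kt ^ 3 + 10 * kt ^ 2 + 3) * (1 + |1 - rs / ρ| ^ (2 * ζ))) := by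
    filter_upwards [hmem] with ρ hρ
    obtain ⟨hρ0, hne⟩ := hρ
    have hne' : ρ ≠ rs := by simpa using hne
    rw [hK ρ hρ0 hne']
    have ht : 0 < |1 - rs / ρ| := abs_pos.mpr (hx0 ρ ⟨hρ0, hne⟩)
    have key : |1 - rs / ρ| ^ (2 * (2 * ζ + kt - 1)) * |1 - rs / ρ| ^ (2 - 4 * ζ - 2 * kt)
        = 1 := by
      rw [← Real.rpow_add ht, show 2 * (2 * ζ + kt - 1) + (2 - 4 * ζ - 2 * kt) = 0 by ring,
        Real.rpow_zero]
    calc |1 - rs / ρ| ^ (2 * (2 * ζ + kt - 1)) *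
          ((2 / (ζ ^ 8 * rs ^ 4)) *
            (1 - Real.sign (1 - rs / ρ) * |1 - rs / ρ| ^ ζ) ^ 6 *
            |1 - rs / ρ| ^ (2 - 4 * ζ - 2 * kt) *
            (4 * kt ^ 2 * (kt + 1) * Real.sign (1 - rs / ρ) * |1 - rs / ρ| ^ ζ +
              ζ * (4 * kt ^ 3 - 5 * kt ^ 2 - 3) * (1 - |1 - rs / ρ| ^ (2 * ζ)) +
              (9 * kt ^ 4 - 2 * kt ^ 3 + 10 * kt ^ 2 + 3) * (1 + |1 - rs / ρ| ^ (2 * ζ))))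
        = (|1 - rs / ρ| ^ (2 * (2 * ζ + kt - 1)) * |1 - rs / ρ| ^ (2 - 4 * ζ - 2 * kt)) *
            ((2 / (ζ ^ 8 * rs ^ 4)) *
            (1 - Real.sign (1 - rs / ρ) * |1 - rs / ρ| ^ ζ) ^ 6 *
            (4 * kt ^ 2 * (kt + 1) * (Real.sign (1 - rs / ρ) * |1 - rs / ρ| ^ ζ) +
              ζ * (4 * kt ^ 3 - 5 * kt ^ 2 - 3) * (1 - |1 - rs / ρ| ^ (2 * ζ)) +
              (9 * kt ^ 4 - 2 * kt ^ 3 + 10 * kt ^ 2 + 3) * (1 + |1 - rs / ρ| ^ (2 * ζ)))) := by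
          ring
      _ = _ := by rw [key, one_mul]
  have hlim : Tendsto (fun ρ : ℝ =>
      (2 / (ζ ^ 8 * rs ^ 4)) *
        (1 - Real.sign (1 - rs / ρ) * |1 - rs / ρ| ^ ζ) ^ 6 *
        (4 * kt ^ 2 * (kt + 1) * (Real.sign (1 - rs / ρ) * |1 - rs / ρ| ^ ζ) +
          ζ * (4 * kt ^ 3 - 5 * kt ^ 2 - 3) * (1 - |1 - rs / ρ| ^ (2 * ζ)) +
          (9 * kt ^ 4 - 2 * kt ^ 3 + 10 * kt ^ 2 + 3) * (1 + |1 - rs / ρ| ^ (2 * ζ))))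
      (𝓝[Set.Ioi 0 \ {rs}] rs)
      (𝓝 ((2 / (ζ ^ 8 * rs ^ 4)) *
        (ζ * (4 * kt ^ 3 - 5 * kt ^ 2 - 3) +
          (9 * kt ^ 4 - 2 * kt ^ 3 + 10 * kt ^ 2 + 3)))) := by
    have hone' : Tendsto (fun _ : ℝ => (1:ℝ)) (𝓝[Set.Ioi 0 \ {rs}] rs) (𝓝 1) :=
      tendsto_const_nhds
    have h1 := ((hone'.sub hu).pow 6).const_mul (2 / (ζ ^ 8 * rs ^ 4))
    have h2 := ((hu.const_mul (4 * kt ^ 2 * (kt + 1))).add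
        ((hone'.sub hv).const_mul (ζ * (4 * kt ^ 3 - 5 * kt ^ 2 - 3)))).add
        ((hone'.add hv).const_mul (9 * kt ^ 4 - 2 * kt ^ 3 + 10 * kt ^ 2 + 3))
    have h3 := h1.mul h2
    have : (2 / (ζ ^ 8 * rs ^ 4)) * ((1:ℝ) - 0) ^ 6 *
        (4 * kt ^ 2 * (kt + 1) * 0 +
          ζ * (4 * kt ^ 3 - 5 * kt ^ 2 - 3) * (1 - 0) +
          (9 * kt ^ 4 - 2 * kt ^ 3 + 10 * kt ^ 2 + 3) * (1 + 0)) =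
        (2 / (ζ ^ 8 * rs ^ 4)) *
          (ζ * (4 * kt ^ 3 - 5 * kt ^ 2 - 3) +
            (9 * kt ^ 4 - 2 * kt ^ 3 + 10 * kt ^ 2 + 3)) := by ring
    rw [this] at h3
    exact h3
  have hpart1 : Tendsto (fun ρ : ℝ => |1 - rs / ρ| ^ (2 * (2 * ζ + kt - 1)) * K ρ)
      (𝓝[Set.Ioi 0 \ {rs}] rs)
      (𝓝 ((2 / (ζ ^ 8 * rs ^ 4)) *
        (ζ * (4 * kt ^ 3 - 5 * kt ^ 2 - 3) +
          (9 * kt ^ 4 - 2 * kt ^ 3 + 10 * kt ^ 2 + 3)))) :=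
    hlim.congr' (EventuallyEq.symm heq1)
  refine ⟨hpart1, ?_, ?_⟩
  · constructor
    · intro h
      by_contra hcon
      push_neg at hcon
      have hsum : 0 < ζ * (4 * kt ^ 3 - 5 * kt ^ 2 - 3) +
          (9 * kt ^ 4 - 2 * kt ^ 3 + 10 * kt ^ 2 + 3) :=
        kbs_sum_pos kt ζ hζ1 hζsq hcon.1 hcon.2
      have := mul_pos hCpos hsum
      linarith [h ▸ this]
    · rintro (rfl | rfl)
      · have h1 : ζ = 1 := by rw [hζ]; norm_num
        rw [h1]; norm_num
      · have h1 : ζ = 2 := by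
          rw [hζ, show (1:ℝ) + 3 * (-1:ℝ) ^ 2 = 2 ^ 2 by norm_num,
            Real.sqrt_sq (by norm_num : (0:ℝ) ≤ 2)]
        rw [h1]; norm_num
  · intro h0 h1
    have hLpos : 0 < (2 / (ζ ^ 8 * rs ^ 4)) *
        (ζ * (4 * kt ^ 3 - 5 * kt ^ 2 - 3) +
          (9 * kt ^ 4 - 2 * kt ^ 3 + 10 * kt ^ 2 + 3)) :=
      mul_pos hCpos (kbs_sum_pos kt ζ hζ1 hζsq h0 h1)
    have he1 : 0 < 2 * (2 * ζ + kt - 1) := by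
      nlinarith [hζsq, hζ1, sq_nonneg (11 * kt + 1)]
    have hinv : Tendsto (fun ρ : ℝ => (|1 - rs / ρ| ^ (2 * (2 * ζ + kt - 1)))⁻¹)
        (𝓝[Set.Ioi 0 \ {rs}] rs) atTop := by
      apply tendsto_inv_nhdsGT_zero.comp
      rw [tendsto_nhdsWithin_iff]
      refine ⟨hrp _ he1, ?_⟩
      filter_upwards [hmem] with ρ hρ
      exact Real.rpow_pos_of_pos (abs_pos.mpr (hx0 ρ hρ)) _
    have hmain := hinv.atTop_mul_pos hLpos hpart1
    apply hmain.congr'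
    filter_upwards [hmem] with ρ hρ
    have ht : 0 < |1 - rs / ρ| ^ (2 * (2 * ζ + kt - 1)) :=
      Real.rpow_pos_of_pos (abs_pos.mpr (hx0 ρ hρ)) _
    rw [← mul_assoc, inv_mul_cancel₀ (ne_of_gt ht), one_mul]
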